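/- arXiv:1003.4541 — 4 statements merged into one kernel-verified Lean document; each statement's English description precedes it below -/
import Mathlib

section
/- Let z₁, z₂ ∈ ℂ with Im(z₁) > 0, Im(z₂) > 0, |z₁| ≥ 80(2π)² and |z₂| ≥ 80(2π)². Suppose that |4π·Im(z₁)/|z₁|² − 4π·Im(z₂)/|z₂|²| ≤ 16(2π)³·(4·Im(z₁)²/|z₁|⁴ + 4·Im(z₂)²/|z₂|⁴) and |4π·Re(z₁)/|z₁|² − 4π·Re(z₂)/|z₂|²| ≤ 20(2π)³·(4·Im(z₁)²/|z₁|⁴ + 4·Im(z₂)²/|z₂|⁴). Then |z₁ − z₂| < 560(2π)²·Im(z₁)/|z₁|. -/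
open Real

set_option maxHeartbeats 1000000 in
theorem lengths_close_implies_w_close (z₁ z₂ : ℂ)
    (him₁ : 0 < z₁.im) (him₂ : 0 < z₂.im)
    (habs₁ : 80 * (2 * π) ^ 2 ≤ ‖z₁‖)
    (habs₂ : 80 * (2 * π) ^ 2 ≤ ‖z₂‖)
    (hL : |4 * π * z₁.im / (‖z₁‖) ^ 2 - 4 * π * z₂.im / (‖z₂‖) ^ 2| ≤
      16 * (2 * π) ^ 3 *
        (4 * z₁.im ^ 2 / (‖z₁‖) ^ 4 + 4 * z₂.im ^ 2 / (‖z₂‖) ^ 4))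
    (hA : |4 * π * z₁.re / (‖z₁‖) ^ 2 - 4 * π * z₂.re / (‖z₂‖) ^ 2| ≤
      20 * (2 * π) ^ 3 *
        (4 * z₁.im ^ 2 / (‖z₁‖) ^ 4 + 4 * z₂.im ^ 2 / (‖z₂‖) ^ 4)) :
    ‖z₁ - z₂‖ < 560 * (2 * π) ^ 2 * z₁.im / ‖z₁‖ := by
  have hπ : (0:ℝ) < π := Real.pi_pos
  set r₁ := ‖z₁‖ with hr₁def
  set r₂ := ‖z₂‖ with hr₂def
  have hP : (0:ℝ) < 80 * (2*π)^2 := by positivity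
  have hr₁ : 0 < r₁ := lt_of_lt_of_le hP habs₁
  have hr₂ : 0 < r₂ := lt_of_lt_of_le hP habs₂
  have hz₁ : z₁ ≠ 0 := fun h => by simp [hr₁def, h] at hr₁
  have hz₂ : z₂ ≠ 0 := fun h => by simp [hr₂def, h] at hr₂
  set A := z₁.im / r₁^2 with hAdef
  set B := z₂.im / r₂^2 with hBdef
  set C := z₁.re / r₁^2 with hCdef
  set D := z₂.re / r₂^2 with hDdef
  have hApos : 0 < A := by positivity
  have hBpos : 0 < B := by positivity
  -- step 1 : bound on |A - B| and |C - D|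
  have h1 : |A - B| ≤ 32*(2*π)^2*(A^2 + B^2) := by
    rw [show (4:ℝ) * π * z₁.im / r₁ ^ 2 - 4 * π * z₂.im / r₂ ^ 2
        = (4*π) * (A - B) by rw [hAdef, hBdef]; ring, abs_mul,
      abs_of_pos (by positivity : (0:ℝ) < 4*π)] at hL
    have hrhs : 16 * (2 * π) ^ 3 * (4 * z₁.im ^ 2 / r₁ ^ 4 + 4 * z₂.im ^ 2 / r₂ ^ 4)
        = 4*π*(32*(2*π)^2*(A^2 + B^2)) := by
      rw [hAdef, hBdef]; field_simp; ring
    rw [hrhs] at hL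
    exact le_of_mul_le_mul_left hL (by positivity)
  have h2 : |C - D| ≤ 40*(2*π)^2*(A^2 + B^2) := by
    rw [show (4:ℝ) * π * z₁.re / r₁ ^ 2 - 4 * π * z₂.re / r₂ ^ 2
        = (4*π) * (C - D) by rw [hCdef, hDdef]; ring, abs_mul,
      abs_of_pos (by positivity : (0:ℝ) < 4*π)] at hA
    have hrhs : 20 * (2 * π) ^ 3 * (4 * z₁.im ^ 2 / r₁ ^ 4 + 4 * z₂.im ^ 2 / r₂ ^ 4)
        = 4*π*(40*(2*π)^2*(A^2 + B^2)) := by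
      rw [hAdef, hBdef]; field_simp; ring
    rw [hrhs] at hA
    exact le_of_mul_le_mul_left hA (by positivity)
  -- step 2 : A, B are at most 1/(80 (2π)^2)
  have hAle : 80*(2*π)^2 * A ≤ 1 := by
    have h : z₁.im ≤ r₁ := z₁.im_le_norm
    rw [hAdef, ← mul_div_assoc, div_le_one (by positivity)]
    nlinarith [habs₁, hr₁, him₁.le]
  have hBle : 80*(2*π)^2 * B ≤ 1 := by
    have h : z₂.im ≤ r₂ := z₂.im_le_norm
    rw [hBdef, ← mul_div_assoc, div_le_one (by positivity)]
    nlinarith [habs₂, hr₂, him₂.le]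
  -- step 3 : comparability of A and B
  have h5 : |A - B| ≤ (2/5)*(A + B) := by
    refine h1.trans ?_
    have t1 := mul_le_mul_of_nonneg_right hAle hApos.le
    have t2 := mul_le_mul_of_nonneg_right hBle hBpos.le
    linarith [t1, t2]
  have hBA : B ≤ (7/3) * A := by
    have := neg_abs_le (A - B)
    linarith [h5]
  have hAB : A ≤ (7/3) * B := by
    have := le_abs_self (A - B)
    linarith [h5]
  -- step 4 : geometric identity
  have hconj₁ : ((r₁:ℂ))^2 = z₁ * (starRingEnd ℂ) z₁ := (Complex.mul_conj' z₁).symm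
  have hconj₂ : ((r₂:ℂ))^2 = z₂ * (starRingEnd ℂ) z₂ := (Complex.mul_conj' z₂).symm
  have hcz₁ : (starRingEnd ℂ) z₁ ≠ 0 := by simpa using hz₁
  have hcz₂ : (starRingEnd ℂ) z₂ ≠ 0 := by simpa using hz₂
  have hu : z₁ / ((r₁:ℂ))^2 - z₂ / ((r₂:ℂ))^2
      = (starRingEnd ℂ) (z₂ - z₁) / ((starRingEnd ℂ) z₁ * (starRingEnd ℂ) z₂) := by
    rw [hconj₁, hconj₂, map_sub, div_mul_cancel_left₀ hz₁, div_mul_cancel_left₀ hz₂,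
      inv_eq_one_div, inv_eq_one_div, div_sub_div _ _ hcz₁ hcz₂, one_mul, mul_one]
  have key : ‖z₁ - z₂‖
      = r₁ * r₂ * ‖z₁ / ((r₁:ℂ))^2 - z₂ / ((r₂:ℂ))^2‖ := by
    rw [hu]
    simp only [norm_div, norm_mul, Complex.norm_conj]
    rw [show z₂ - z₁ = -(z₁ - z₂) by ring, norm_neg, ← hr₁def, ← hr₂def]
    field_simp
  -- step 5 : bound abs by re + im
  have e₁ : z₁ / ((r₁:ℂ))^2 = z₁ / (((r₁^2 : ℝ)):ℂ) := by norm_cast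
  have e₂ : z₂ / ((r₂:ℂ))^2 = z₂ / (((r₂^2 : ℝ)):ℂ) := by norm_cast
  have hre : (z₁ / ((r₁:ℂ))^2 - z₂ / ((r₂:ℂ))^2).re = C - D := by
    rw [hCdef, hDdef, Complex.sub_re, e₁, e₂, Complex.div_ofReal_re, Complex.div_ofReal_re]
  have him : (z₁ / ((r₁:ℂ))^2 - z₂ / ((r₂:ℂ))^2).im = A - B := by
    rw [hAdef, hBdef, Complex.sub_im, e₁, e₂, Complex.div_ofReal_im, Complex.div_ofReal_im]
  have hbound : ‖z₁ - z₂‖ ≤ r₁ * r₂ * (|C - D| + |A - B|) := by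
    rw [key]
    have h6 := Complex.norm_le_abs_re_add_abs_im (z₁ / ((r₁:ℂ))^2 - z₂ / ((r₂:ℂ))^2)
    rw [hre, him] at h6
    exact mul_le_mul_of_nonneg_left h6 (by positivity)
  -- step 6 : final chain
  have hfinal : ‖z₁ - z₂‖ ≤ 336*(2*π)^2 * (z₁.im/r₁) * (z₂.im/r₂) := by
    calc ‖z₁ - z₂‖ ≤ r₁ * r₂ * (|C - D| + |A - B|) := hbound
      _ ≤ r₁ * r₂ * (72*(2*π)^2*(A^2 + B^2)) := by
          refine mul_le_mul_of_nonneg_left ?_ (by positivity)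
          linarith [h1, h2]
      _ ≤ r₁ * r₂ * (72*(2*π)^2*((14/3) * (A*B))) := by
          refine mul_le_mul_of_nonneg_left ?_ (by positivity)
          refine mul_le_mul_of_nonneg_left ?_ (by positivity)
          nlinarith [hBA, hAB, hApos, hBpos]
      _ = 336*(2*π)^2 * (z₁.im/r₁) * (z₂.im/r₂) := by
          rw [hAdef, hBdef]; field_simp; ring
  have him2r : z₂.im / r₂ ≤ 1 := by
    rw [div_le_one hr₂]; exact z₂.im_le_norm
  have hgoalpos : 0 < (2*π)^2 * (z₁.im / r₁) := by positivity
  calc ‖z₁ - z₂‖ ≤ 336*(2*π)^2 * (z₁.im/r₁) * (z₂.im/r₂) := hfinal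
    _ ≤ 336*(2*π)^2 * (z₁.im/r₁) := by
        nlinarith [him2r, hgoalpos]
    _ < 560 * (2*π)^2 * z₁.im / r₁ := by
        rw [mul_div_assoc]
        nlinarith [hgoalpos]
end

section
/- Let R > 0, α > 0 and x, y ∈ ℝ. If (−tanh(R)·(2·cosh²(R)+1)/cosh²(R))·(x² + y²) + (tanh(R)/(2·α²·cosh²(R)·sinh²(R)))·x + (tanh(R) + tanh³(R))/(16·α⁴·sinh⁴(R)) ≥ 0, then −(1/sinh²(R))·((2·sinh²(R)+1)/(2·sinh²(R)+3)) ≤ 4·α²·x ≤ 1/sinh²(R), and |4·α²·y| ≤ (2/sinh²(R))·(cosh²(R)/(2·cosh²(R)+1)). -/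
open Real

set_option maxHeartbeats 1000000

theorem derivative_estimates_core (R α x y : ℝ) (hR : 0 < R) (hα : 0 < α)
    (h : (-Real.tanh R * (2 * Real.cosh R ^ 2 + 1) / Real.cosh R ^ 2) * (x ^ 2 + y ^ 2) +
        (Real.tanh R / (2 * α ^ 2 * Real.cosh R ^ 2 * Real.sinh R ^ 2)) * x +
        (Real.tanh R + Real.tanh R ^ 3) / (16 * α ^ 4 * Real.sinh R ^ 4) ≥ 0) :
    (-(1 / Real.sinh R ^ 2) * ((2 * Real.sinh R ^ 2 + 1) / (2 * Real.sinh R ^ 2 + 3)) ≤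
        4 * α ^ 2 * x ∧
      4 * α ^ 2 * x ≤ 1 / Real.sinh R ^ 2) ∧
    |4 * α ^ 2 * y| ≤ (2 / Real.sinh R ^ 2) * (Real.cosh R ^ 2 / (2 * Real.cosh R ^ 2 + 1)) := by
  have hs : 0 < Real.sinh R := by positivity
  have hc : 0 < Real.cosh R := Real.cosh_pos R
  set s := Real.sinh R with hsdef
  set c := Real.cosh R with hcdef
  have hc2 : c ^ 2 = 1 + s ^ 2 := by
    rw [hcdef, hsdef, Real.cosh_sq]; ring
  rw [Real.tanh_eq_sinh_div_cosh, ← hsdef, ← hcdef, ge_iff_le] at h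
  have hs0 : s ≠ 0 := ne_of_gt hs
  have hc0 : c ≠ 0 := ne_of_gt hc
  have hα0 : (α : ℝ) ≠ 0 := ne_of_gt hα
  field_simp at h
  -- key inequality with denominators cleared, all in terms of s
  have hE : 0 ≤ -(16 * α ^ 4 * s ^ 4 * (2 * c ^ 2 + 1) * (x ^ 2 + y ^ 2)) +
      8 * α ^ 2 * s ^ 2 * x + (c ^ 2 + s ^ 2) := by
    have hpos : (0:ℝ) < 2 * α ^ 2 * c ^ 7 * s ^ 3 := by positivity
    nlinarith [h, hpos]
  rw [hc2] at hE
  set u := 4 * α ^ 2 * x with hu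
  set v := 4 * α ^ 2 * y with hv
  have key : (2 * s ^ 2 + 3) * s ^ 4 * (u ^ 2 + v ^ 2) ≤ 2 * u * s ^ 2 + (2 * s ^ 2 + 1) := by
    rw [hu, hv]; nlinarith [hE]
  have hs2 : (0:ℝ) < s ^ 2 := by positivity
  have hden : (0:ℝ) < 2 * s ^ 2 + 3 := by nlinarith
  have hfac : (s ^ 2 * u - 1) * ((2 * s ^ 2 + 3) * s ^ 2 * u + (2 * s ^ 2 + 1)) ≤ 0 := by
    nlinarith [key, mul_nonneg (mul_nonneg hden.le (pow_nonneg hs.le 4)) (sq_nonneg v)]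
  have hupper : u ≤ 1 / s ^ 2 := by
    by_contra hcon
    push_neg at hcon
    have h1 : 1 < s ^ 2 * u := by
      rw [div_lt_iff₀ hs2] at hcon; linarith
    have ht : (0:ℝ) < s ^ 2 * u - 1 := by linarith
    nlinarith [hfac, mul_pos (mul_pos hden ht) ht, mul_pos hs2 ht, ht]
  have hlow' : 0 ≤ (2 * s ^ 2 + 3) * s ^ 2 * u + (2 * s ^ 2 + 1) := by
    by_contra hneg
    push_neg at hneg
    have ht : s ^ 2 * u < 0 := by
      by_contra ht'
      push_neg at ht'
      nlinarith [mul_nonneg hden.le ht']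
    have h1 : (0:ℝ) < 1 - s ^ 2 * u := by linarith
    have hprod := mul_pos h1 (show (0:ℝ) < -((2 * s ^ 2 + 3) * s ^ 2 * u + (2 * s ^ 2 + 1)) by linarith)
    nlinarith [hfac, hprod]
  have hlower : -(1 / s ^ 2) * ((2 * s ^ 2 + 1) / (2 * s ^ 2 + 3)) ≤ u := by
    have heq : -(1 / s ^ 2) * ((2 * s ^ 2 + 1) / (2 * s ^ 2 + 3)) =
        -((2 * s ^ 2 + 1) / (s ^ 2 * (2 * s ^ 2 + 3))) := by
      field_simp
    rw [heq, neg_le, ← neg_neg ((2 * s ^ 2 + 1) / (s ^ 2 * (2 * s ^ 2 + 3))),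
      neg_le_neg_iff] at *
    rw [neg_le, le_div_iff₀ (by positivity : (0:ℝ) < s ^ 2 * (2 * s ^ 2 + 3))]
    nlinarith [hlow']
  refine ⟨⟨hlower, hupper⟩, ?_⟩
  have hB : (0:ℝ) < (2 / s ^ 2) * (c ^ 2 / (2 * c ^ 2 + 1)) := by positivity
  have hv2 : v ^ 2 ≤ ((2 / s ^ 2) * (c ^ 2 / (2 * c ^ 2 + 1))) ^ 2 := by
    rw [hc2, div_mul_div_comm, div_pow, le_div_iff₀ (by positivity)]
    nlinarith [key, mul_le_mul_of_nonneg_left key hden.le,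
      sq_nonneg ((2 * s ^ 2 + 3) * s ^ 2 * u - 1)]
  rw [abs_le]
  constructor <;> nlinarith [hv2, hB]
end

section
/- For every real number z with 0.48 ≤ z ≤ 1, one has 2·(1 + z²)/(1.69785·z³·(3 − z²)) ≤ 5. -/
theorem z_inequality_lemma_4_6 (z : ℝ) (h₁ : 0.48 ≤ z) (h₂ : z ≤ 1) :
    2 * (1 + z ^ 2) / (1.69785 * z ^ 3 * (3 - z ^ 2)) ≤ 5 := by
  have hz : (0:ℝ) < z := by linarith
  have hd : 0 < 1.69785 * z ^ 3 * (3 - z ^ 2) := by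
    have h3 : 0 < z ^ 3 := by positivity
    nlinarith [sq_nonneg z, h3, mul_pos h3 (show (0:ℝ) < 3 - z^2 by nlinarith)]
  rw [div_le_iff₀ hd]
  nlinarith [pow_le_pow_left₀ (by norm_num : (0:ℝ) ≤ 0.48) h₁ 3, sq_nonneg (z - 1),
    mul_nonneg (mul_nonneg hz.le hz.le) hz.le, sq_nonneg (z*z - 1),
    mul_nonneg (sq_nonneg (z-1)) (pow_pos hz 3).le, sq_nonneg (z - 0.48)]
end

section
/- Let D > 0, let z be a real number with 0.48 ≤ z < 1, and let P, Q be nonnegative reals with P ≤ 2π/D and Q ≤ 1/D. Then P · Q · ((1 + z²)/(1.69785·z·(1 − z²))) · (2·(1 − z²)/(3z² − z⁴)) ≤ 10π/D². -/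
open Real

theorem dv_dalpha_assembled (D z P Q : ℝ) (hD : 0 < D)
    (hz₁ : 0.48 ≤ z) (hz₂ : z < 1)
    (hP₀ : 0 ≤ P) (hQ₀ : 0 ≤ Q)
    (hP : P ≤ 2 * π / D) (hQ : Q ≤ 1 / D) :
    P * Q * ((1 + z ^ 2) / (1.69785 * z * (1 - z ^ 2))) *
        (2 * (1 - z ^ 2) / (3 * z ^ 2 - z ^ 4)) ≤ 10 * π / D ^ 2 := by
  have hz0 : (0:ℝ) < z := by linarith
  have h1 : (0:ℝ) < 1 - z ^ 2 := by nlinarith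
  have h2 : (0:ℝ) < 3 * z ^ 2 - z ^ 4 := by nlinarith
  have hden : (0:ℝ) < 1.69785 * z * (1 - z ^ 2) * (3 * z ^ 2 - z ^ 4) := by positivity
  have key : (1 + z ^ 2) / (1.69785 * z * (1 - z ^ 2)) *
      (2 * (1 - z ^ 2) / (3 * z ^ 2 - z ^ 4)) ≤ 5 := by
    rw [div_mul_div_comm, div_le_iff₀ hden]
    have h48 : (0:ℝ) ≤ z - 0.48 := by linarith
    have h1' : (0:ℝ) ≤ 1 - z := by linarith
    nlinarith [mul_nonneg h48 h1.le, mul_nonneg (mul_nonneg h48 h48) h1',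
      mul_nonneg (mul_nonneg h48 h1') hz0.le, mul_nonneg h48 (sq_nonneg (z-1)),
      mul_nonneg (mul_nonneg h48 h48) hz0.le, sq_nonneg (z-0.48), sq_nonneg (z-1),
      mul_nonneg (mul_nonneg (mul_nonneg h48 h48) h48) h1',
      mul_nonneg (mul_nonneg (mul_nonneg h48 h1') h1') hz0.le]
  have hAB0 : 0 ≤ (1 + z ^ 2) / (1.69785 * z * (1 - z ^ 2)) *
      (2 * (1 - z ^ 2) / (3 * z ^ 2 - z ^ 4)) := by positivity
  have hPQ : P * Q ≤ (2 * π / D) * (1 / D) := by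
    apply mul_le_mul hP hQ hQ₀
    positivity
  calc P * Q * ((1 + z ^ 2) / (1.69785 * z * (1 - z ^ 2))) *
        (2 * (1 - z ^ 2) / (3 * z ^ 2 - z ^ 4))
      = (P * Q) * ((1 + z ^ 2) / (1.69785 * z * (1 - z ^ 2)) *
        (2 * (1 - z ^ 2) / (3 * z ^ 2 - z ^ 4))) := by ring
    _ ≤ ((2 * π / D) * (1 / D)) * 5 :=
        mul_le_mul hPQ key hAB0 (by positivity)
    _ = 10 * π / D ^ 2 := by field_simp; ring
end
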